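/- Let G=(V,E) be a digraph with V nonempty and finite. Then the root R(G) is the smallest subset S ⊆ V satisfying: (i) for every v ∈ V there exists w ∈ S and a walk from w to v in G; and (ii) if v ∈ S and (w,v) ∈ E for some w ∈ V, then w ∈ S. That is, R(G) satisfies (i) and (ii), and every subset S ⊆ V satisfying (i) and (ii) contains R(G). -/

import Mathlib

/-- There is a walk of length exactly `n` from `v` to `w` in the digraph with edge relation `E`. -/
def HasWalkOfLength {V : Type*} (E : V → V → Prop) (v w : V) (n : ℕ) : Prop :=
  ∃ f : ℕ → V, f 0 = v ∧ f n = w ∧ ∀ i < n, E (f i) (f (i + 1))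

/-- `v ⇝ w` : there is a walk (of some length, possibly `0`) from `v` to `w`. -/
def Reaches {V : Type*} (E : V → V → Prop) : V → V → Prop :=
  Relation.ReflTransGen E

/-- The equivalence relation whose classes are the strongly connected components:
`v ∼ w` iff there are walks from `v` to `w` and from `w` to `v`. -/
def SCCSetoid {V : Type*} (E : V → V → Prop) : Setoid V where
  r v w := Reaches E v w ∧ Reaches E w v
  iseqv := ⟨fun _ => ⟨Relation.ReflTransGen.refl, Relation.ReflTransGen.refl⟩,
    fun h => ⟨h.2, h.1⟩,
    fun h h' => ⟨Relation.ReflTransGen.trans h.1 h'.1, Relation.ReflTransGen.trans h'.2 h.2⟩⟩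

/-- The edge relation of the quotient digraph `G^SCC` of strongly connected components :
`(P, Q)` is an edge iff `P ≠ Q` and there is an edge `(a, b) ∈ E` with `a ∈ P`, `b ∈ Q`. -/
def SCCEdge {V : Type*} (E : V → V → Prop) (P Q : Quotient (SCCSetoid E)) : Prop :=
  P ≠ Q ∧ ∃ a b : V, Quotient.mk (SCCSetoid E) a = P ∧ Quotient.mk (SCCSetoid E) b = Q ∧ E a b

/-- The root `R(G)`: the union of the strongly connected components having no
incoming edge in `G^SCC` (i.e. lying in the source of `G^SCC`). -/
def Root {V : Type*} (E : V → V → Prop) : Set V :=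
  {v | ∀ P, ¬ SCCEdge E P (Quotient.mk (SCCSetoid E) v)}

/-- `f` restricted to `{0,…,n}` is a cycle: a nonempty walk in which only the first and
last vertices are equal. -/
def IsCycle {V : Type*} (E : V → V → Prop) (f : ℕ → V) (n : ℕ) : Prop :=
  0 < n ∧ (∀ i < n, E (f i) (f (i + 1))) ∧ f 0 = f n ∧
    ∀ i j, i < j → j ≤ n → f i = f j → i = 0 ∧ j = n

/-- A digraph is aperiodic if no integer `k > 1` divides the length of every cycle. -/
def IsAperiodic {V : Type*} (E : V → V → Prop) : Prop :=
  ¬ ∃ k : ℕ, 1 < k ∧ ∀ (f : ℕ → V) (n : ℕ), IsCycle E f n → k ∣ n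

/-- A digraph is ergodic if it is nonempty, irreducible and aperiodic. -/
def IsErgodic {V : Type*} (E : V → V → Prop) : Prop :=
  Nonempty V ∧ (∀ v w : V, Reaches E v w) ∧ IsAperiodic E

open Relation in
private lemma root_of_eq {V : Type*} (E : V → V → Prop) {b v : V}
    (h : Quotient.mk (SCCSetoid E) b = Quotient.mk (SCCSetoid E) v)
    (hv : v ∈ Root E) : b ∈ Root E := by
  intro P hP
  rw [h] at hP
  exact hv P hP

open Relation in
private lemma reaches_back {V : Type*} (E : V → V → Prop) {w v : V}
    (h : Reaches E w v) : v ∈ Root E → Reaches E v w ∧ w ∈ Root E := by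
  induction h with
  | refl => exact fun hv => ⟨ReflTransGen.refl, hv⟩
  | @tail b c h e ih =>
    intro hc
    have hbc : Quotient.mk (SCCSetoid E) b = Quotient.mk (SCCSetoid E) c := by
      by_contra hne
      exact hc _ ⟨hne, b, c, rfl, rfl, e⟩
    have hb : b ∈ Root E := root_of_eq E hbc hc
    have hrel : Reaches E b c ∧ Reaches E c b := Quotient.exact hbc
    obtain ⟨hbw, hwroot⟩ := ih hb
    exact ⟨hrel.2.trans hbw, hwroot⟩

/-- Characterization theorem of the root: for a digraph `G = (V, E)` with `V` nonempty and
finite, `R(G)` is the smallest subset `S ⊆ V` such that (i) every vertex of `V` is reachable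
by a walk from some element of `S`, and (ii) `S` is closed under taking tails of edges
ending in `S`. -/
theorem stmt_1 {V : Type*} [Fintype V] [Nonempty V] (E : V → V → Prop) :
    (∀ v : V, ∃ w ∈ Root E, Reaches E w v) ∧
    (∀ v ∈ Root E, ∀ w : V, E w v → w ∈ Root E) ∧
    (∀ S : Set V, (∀ v : V, ∃ w ∈ S, Reaches E w v) →
      (∀ v ∈ S, ∀ w : V, E w v → w ∈ S) → Root E ⊆ S) := by
  classical
  refine ⟨?_, ?_, ?_⟩
  · intro v
    obtain ⟨w, hwmem, hwmin⟩ := Finset.exists_min_image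
      (Finset.univ.filter (fun u => Reaches E u v))
      (fun u => (Finset.univ.filter (fun x => Reaches E x u)).card)
      ⟨v, by simp only [Finset.mem_filter, Finset.mem_univ, true_and]; exact Relation.ReflTransGen.refl⟩
    simp only [Finset.mem_filter, Finset.mem_univ, true_and] at hwmem
    refine ⟨w, ?_, hwmem⟩
    intro P hP
    obtain ⟨hne, a, b, ha, hb, e⟩ := hP
    have hbw : Reaches E b w ∧ Reaches E w b := Quotient.exact hb
    have haw : Reaches E a w := Relation.ReflTransGen.head e hbw.1
    have hav : Reaches E a v := haw.trans hwmem
    have hmin := hwmin a (by simp [hav])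
    have hsub : (Finset.univ.filter (fun x => Reaches E x a)) ⊂
        (Finset.univ.filter (fun x => Reaches E x w)) := by
      refine ⟨fun x hx => ?_, fun hcon => ?_⟩
      · simp only [Finset.mem_filter, Finset.mem_univ, true_and] at hx ⊢
        exact hx.trans haw
      · have hw : w ∈ Finset.univ.filter (fun x => Reaches E x w) := by
          simp only [Finset.mem_filter, Finset.mem_univ, true_and]; exact Relation.ReflTransGen.refl
        have := hcon hw
        simp only [Finset.mem_filter, Finset.mem_univ, true_and] at this
        exact hne (by rw [← ha]; exact Quotient.sound ⟨haw, this⟩)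
    exact absurd hmin (by simpa using Finset.card_lt_card hsub)
  · intro v hv w e
    have hbc : Quotient.mk (SCCSetoid E) w = Quotient.mk (SCCSetoid E) v := by
      by_contra hne
      exact hv _ ⟨hne, w, v, rfl, rfl, e⟩
    exact root_of_eq E hbc hv
  · intro S hS hclosed v hv
    obtain ⟨w, hwS, hwv⟩ := hS v
    obtain ⟨hvw, _⟩ := reaches_back E hwv hv
    clear hwv hv
    induction hvw using Relation.ReflTransGen.head_induction_on with
    | refl => exact hwS
    | head e h ih => exact hclosed _ ih _ e
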